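/- Fix Y ∈ ℝ^{D×N} and λ_e, λ_z ≥ 0. Let m₁ be the infimum of f(C, E, Z) = ‖C‖₁ + λ_e‖E‖₁ + (λ_z/2)‖Z‖_F² over all C ∈ ℝ^{N×N}, E, Z ∈ ℝ^{D×N} subject to Y = YC + E + Z, diag(C) = 0, and Cᵀ𝟙 = 𝟙. Let m₂ be the infimum of g(C, A, E) = ‖C‖₁ + λ_e‖E‖₁ + (λ_z/2)‖Y − YA − E‖_F² over all C, A ∈ ℝ^{N×N}, E ∈ ℝ^{D×N} subject to Aᵀ𝟙 = 𝟙 and A = C − diag(C). Then m₁ = m₂; that is, the two constrained optimization problems are equivalent. -/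

import Mathlib

open Matrix

/-- The entrywise ℓ¹ norm of a real matrix: sum of absolute values of entries. -/
def matL1 {m n : Type*} [Fintype m] [Fintype n] (M : Matrix m n ℝ) : ℝ :=
  ∑ i, ∑ j, |M i j|

/-- The squared Frobenius norm of a real matrix. -/
def frobSq {m n : Type*} [Fintype m] [Fintype n] (M : Matrix m n ℝ) : ℝ :=
  ∑ i, ∑ j, (M i j) ^ 2

/-- The matrix keeping only the diagonal entries of a square matrix. -/
def diagPart {n : Type*} [DecidableEq n] (C : Matrix n n ℝ) : Matrix n n ℝ :=
  Matrix.diagonal (fun i => C i i)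

lemma matL1_nonneg {m n : Type*} [Fintype m] [Fintype n] (M : Matrix m n ℝ) :
    0 ≤ matL1 M :=
  Finset.sum_nonneg fun _ _ => Finset.sum_nonneg fun _ _ => abs_nonneg _

lemma frobSq_nonneg {m n : Type*} [Fintype m] [Fintype n] (M : Matrix m n ℝ) :
    0 ≤ frobSq M :=
  Finset.sum_nonneg fun _ _ => Finset.sum_nonneg fun _ _ => sq_nonneg _

lemma matL1_sub_diagPart_le {n : Type*} [Fintype n] [DecidableEq n]
    (C : Matrix n n ℝ) : matL1 (C - diagPart C) ≤ matL1 C := by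
  unfold matL1
  refine Finset.sum_le_sum fun i _ => Finset.sum_le_sum fun j _ => ?_
  by_cases h : i = j
  · subst h
    simp [diagPart, Matrix.diagonal_apply_eq]
  · simp [diagPart, Matrix.diagonal_apply_ne _ h, Matrix.sub_apply]

/-- Equivalence of the two constrained optimization problems (7) and (8) of the paper:
the infimum of `‖C‖₁ + λ_e ‖E‖₁ + (λ_z/2)‖Z‖_F²` subject to `Y = YC + E + Z`,
`diag(C) = 0`, `Cᵀ𝟙 = 𝟙` equals the infimum of
`‖C‖₁ + λ_e ‖E‖₁ + (λ_z/2)‖Y - YA - E‖_F²` subject to `Aᵀ𝟙 = 𝟙`, `A = C - diag(C)`. -/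
theorem optimization_problems_equivalent {D N : ℕ} (Y : Matrix (Fin D) (Fin N) ℝ)
    (lam_e lam_z : ℝ) (hle : 0 ≤ lam_e) (hlz : 0 ≤ lam_z) :
    sInf {r : ℝ | ∃ (C : Matrix (Fin N) (Fin N) ℝ) (E Z : Matrix (Fin D) (Fin N) ℝ),
        Y = Y * C + E + Z ∧ diagPart C = 0 ∧
        Cᵀ.mulVec (fun _ => (1 : ℝ)) = (fun _ => (1 : ℝ)) ∧
        r = matL1 C + lam_e * matL1 E + lam_z / 2 * frobSq Z} =
      sInf {r : ℝ | ∃ (C A : Matrix (Fin N) (Fin N) ℝ) (E : Matrix (Fin D) (Fin N) ℝ),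
        Aᵀ.mulVec (fun _ => (1 : ℝ)) = (fun _ => (1 : ℝ)) ∧ A = C - diagPart C ∧
        r = matL1 C + lam_e * matL1 E + lam_z / 2 * frobSq (Y - Y * A - E)} := by
  set S := {r : ℝ | ∃ (C : Matrix (Fin N) (Fin N) ℝ) (E Z : Matrix (Fin D) (Fin N) ℝ),
        Y = Y * C + E + Z ∧ diagPart C = 0 ∧
        Cᵀ.mulVec (fun _ => (1 : ℝ)) = (fun _ => (1 : ℝ)) ∧
        r = matL1 C + lam_e * matL1 E + lam_z / 2 * frobSq Z} with hS
  set T := {r : ℝ | ∃ (C A : Matrix (Fin N) (Fin N) ℝ) (E : Matrix (Fin D) (Fin N) ℝ),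
        Aᵀ.mulVec (fun _ => (1 : ℝ)) = (fun _ => (1 : ℝ)) ∧ A = C - diagPart C ∧
        r = matL1 C + lam_e * matL1 E + lam_z / 2 * frobSq (Y - Y * A - E)} with hT
  have hnn : ∀ (C : Matrix (Fin N) (Fin N) ℝ) (E M : Matrix (Fin D) (Fin N) ℝ),
      (0:ℝ) ≤ matL1 C + lam_e * matL1 E + lam_z / 2 * frobSq M := by
    intro C E M
    have := matL1_nonneg C
    have := mul_nonneg hle (matL1_nonneg E)
    have := mul_nonneg (by linarith : (0:ℝ) ≤ lam_z / 2) (frobSq_nonneg M)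
    linarith
  have hSbdd : BddBelow S := by
    refine ⟨0, fun r hr => ?_⟩
    obtain ⟨C, E, Z, _, _, _, hr⟩ := hr
    rw [hr]; exact hnn C E Z
  have hTbdd : BddBelow T := by
    refine ⟨0, fun r hr => ?_⟩
    obtain ⟨C, A, E, _, _, hr⟩ := hr
    rw [hr]; exact hnn C E _
  have hsub : S ⊆ T := by
    intro r hr
    obtain ⟨C, E, Z, hY, hdiag, hcol, hr⟩ := hr
    refine ⟨C, C, E, hcol, by rw [hdiag, sub_zero], ?_⟩
    have hZ : Y - Y * C - E = Z := by nth_rewrite 1 [hY]; abel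
    rw [hZ]; exact hr
  -- from T to S
  have hback : ∀ r ∈ T, ∃ r' ∈ S, r' ≤ r := by
    intro r hr
    obtain ⟨C, A, E, hcol, hA, hr⟩ := hr
    have hdiagA : diagPart A = 0 := by
      ext i j
      rcases eq_or_ne i j with rfl | h
      · simp [diagPart, hA, Matrix.sub_apply, Matrix.diagonal_apply_eq]
      · simp [diagPart, Matrix.diagonal_apply_ne _ h]
    refine ⟨matL1 A + lam_e * matL1 E + lam_z / 2 * frobSq (Y - Y * A - E),
      ⟨A, E, Y - Y * A - E, by abel, hdiagA, hcol, rfl⟩, ?_⟩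
    rw [hr]
    have := matL1_sub_diagPart_le C
    rw [← hA] at this
    linarith
  by_cases hTne : T.Nonempty
  · obtain ⟨t, ht⟩ := hTne
    obtain ⟨s, hs, _⟩ := hback t ht
    have hSne : S.Nonempty := ⟨s, hs⟩
    apply le_antisymm
    · refine le_csInf ⟨t, ht⟩ fun r hr => ?_
      obtain ⟨r', hr', hle'⟩ := hback r hr
      exact le_trans (csInf_le hSbdd hr') hle'
    · exact csInf_le_csInf hTbdd hSne hsub
  · have hSe : S = ∅ := by
      rw [Set.eq_empty_iff_forall_notMem]
      intro r hr
      exact hTne ⟨r, hsub hr⟩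
    have hTe : T = ∅ := Set.not_nonempty_iff_eq_empty.mp hTne
    rw [hSe, hTe]
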